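/- Let M = {(x,y,z) ∈ [−1,1]³ : xyz ≥ 0, |xy| ≤ |z|, |xz| ≤ |y|, |yz| ≤ |x|} and let E = {(x,y,z) ∈ ℝ³ : the matrix [[1,x,y],[x,1,z],[y,z,1]] is positive definite}. Then the Lebesgue volume of M equals (2/π²) times the Lebesgue volume of E; equivalently, vol(M)/vol(E) = 2/π². -/

import Mathlib

open MeasureTheory
open Real Set


lemma posdef_iff (x y z : ℝ) :
    (Matrix.of ![![1, x, y], ![x, 1, z], ![y, z, 1]]).PosDef ↔
      x ^ 2 < 1 ∧ y ^ 2 < 1 ∧ (z - x * y) ^ 2 < (1 - x ^ 2) * (1 - y ^ 2) := by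
  constructor
  · intro h
    have hdet : 0 < (Matrix.of ![![1, x, y], ![x, 1, z], ![y, z, 1]]).det := h.det_pos
    rw [Matrix.det_fin_three] at hdet
    simp [Matrix.of_apply] at hdet
    have h1 := h.dotProduct_mulVec_pos (x := ![1, -x, 0]) (by intro hv; have := congrFun hv 0; simp at this)
    have h2 := h.dotProduct_mulVec_pos (x := ![1, 0, -y]) (by intro hv; have := congrFun hv 0; simp at this)
    simp [dotProduct, Matrix.mulVec, Fin.sum_univ_three] at h1 h2
    refine ⟨by nlinarith, by nlinarith, by nlinarith⟩
  · rintro ⟨hx, hy, hd⟩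
    refine Matrix.posDef_iff_dotProduct_mulVec.mpr ⟨?_, ?_⟩
    · ext i j
      fin_cases i <;> fin_cases j <;> simp [Matrix.conjTranspose_apply]
    · intro v hv
      have hv' : ¬ (v 0 = 0 ∧ v 1 = 0 ∧ v 2 = 0) := by
        rintro ⟨h0, h1, h2⟩
        apply hv; ext i; fin_cases i <;> assumption
      simp only [dotProduct, Matrix.mulVec, Fin.sum_univ_three] at *
      simp [Matrix.of_apply]
      by_cases h2 : v 2 = 0
      · by_cases h1 : v 1 = 0
        · have h0 : v 0 ≠ 0 := by tauto
          rw [h1, h2]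
          nlinarith [mul_self_pos.mpr h0]
        · rw [h2]
          nlinarith [sq_nonneg (v 0 + x * v 1), mul_pos (sub_pos.2 hx) (mul_self_pos.mpr h1)]
      · nlinarith [mul_nonneg (sub_pos.2 hx).le (sq_nonneg (v 0 + x * v 1 + y * v 2)),
          mul_pos (sub_pos.2 hd) (mul_self_pos.mpr h2),
          sq_nonneg ((1 - x^2) * v 1 + (z - x*y) * v 2), sub_pos.2 hx]


lemma sqrt_lintegral :
    ∫⁻ y in Set.Ioo (-1:ℝ) 1, ENNReal.ofReal (Real.sqrt (1 - y^2)) = ENNReal.ofReal (π/2) := by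
  have hc : Continuous fun y : ℝ => Real.sqrt (1 - y^2) :=
    (continuous_const.sub (continuous_pow 2)).sqrt
  have hi : IntegrableOn (fun y : ℝ => Real.sqrt (1 - y^2)) (Ioo (-1:ℝ) 1) :=
    (hc.integrableOn_Icc).mono_set Ioo_subset_Icc_self
  rw [← ofReal_integral_eq_lintegral_ofReal hi (ae_of_all _ fun y => Real.sqrt_nonneg _)]
  congr 1
  rw [← integral_Ioc_eq_integral_Ioo, ← intervalIntegral.integral_of_le (by norm_num : (-1:ℝ) ≤ 1)]
  exact integral_sqrt_one_sub_sq

lemma volE : volume {p : ℝ × ℝ × ℝ |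
      p.1^2 < 1 ∧ p.2.1^2 < 1 ∧ (p.2.2 - p.1*p.2.1)^2 < (1-p.1^2)*(1-p.2.1^2)} =
    ENNReal.ofReal (π^2/2) := by
  set S : Set (ℝ × ℝ × ℝ) := {p : ℝ × ℝ × ℝ |
      p.1^2 < 1 ∧ p.2.1^2 < 1 ∧ (p.2.2 - p.1*p.2.1)^2 < (1-p.1^2)*(1-p.2.1^2)} with hS
  have hopen : IsOpen S := by
    rw [hS]
    simp only [Set.setOf_and]
    refine IsOpen.inter (isOpen_lt (by fun_prop) continuous_const) (IsOpen.inter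
      (isOpen_lt (by fun_prop) continuous_const) (isOpen_lt (by fun_prop) (by fun_prop)))
  have hm : MeasurableSet S := hopen.measurableSet
  rw [Measure.volume_eq_prod, Measure.prod_apply hm]
  have key : ∀ x : ℝ, volume (Prod.mk x ⁻¹' S) =
      Set.indicator (Ioo (-1:ℝ) 1)
        (fun x => ENNReal.ofReal (2 * Real.sqrt (1-x^2)) * ENNReal.ofReal (π/2)) x := by
    intro x
    by_cases hx : x ∈ Ioo (-1:ℝ) 1
    · have hx2 : x^2 < 1 := by
        rcases hx with ⟨h1, h2⟩; nlinarith
      have hm2 : MeasurableSet (Prod.mk x ⁻¹' S) := measurable_prodMk_left hm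
      rw [Measure.volume_eq_prod, Measure.prod_apply hm2]
      have inner : ∀ y : ℝ, volume (Prod.mk y ⁻¹' (Prod.mk x ⁻¹' S)) =
          Set.indicator (Ioo (-1:ℝ) 1)
            (fun y => ENNReal.ofReal (2 * Real.sqrt (1-x^2) * Real.sqrt (1-y^2))) y := by
        intro y
        by_cases hy : y ∈ Ioo (-1:ℝ) 1
        · have hy2 : y^2 < 1 := by rcases hy with ⟨h1, h2⟩; nlinarith
          have hD : (0:ℝ) < (1-x^2)*(1-y^2) := mul_pos (by linarith) (by linarith)
          have hset : Prod.mk y ⁻¹' (Prod.mk x ⁻¹' S) =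
              Ioo (x*y - Real.sqrt ((1-x^2)*(1-y^2))) (x*y + Real.sqrt ((1-x^2)*(1-y^2))) := by
            ext z
            simp only [hS, Set.mem_preimage, Set.mem_setOf_eq, Set.mem_Ioo]
            constructor
            · rintro ⟨-, -, h⟩
              have : |z - x*y| < Real.sqrt ((1-x^2)*(1-y^2)) := by
                rw [show |z - x*y| = Real.sqrt ((z - x*y)^2) by rw [Real.sqrt_sq_eq_abs]]
                exact Real.sqrt_lt_sqrt (sq_nonneg _) h
              rcases abs_lt.1 this with ⟨h1, h2⟩
              constructor <;> linarith
            · rintro ⟨h1, h2⟩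
              refine ⟨hx2, hy2, ?_⟩
              have : |z - x*y| < Real.sqrt ((1-x^2)*(1-y^2)) := abs_lt.2 ⟨by linarith, by linarith⟩
              have h3 := Real.sq_sqrt hD.le
              nlinarith [abs_nonneg (z - x*y), sq_abs (z - x*y),
                Real.sqrt_nonneg ((1-x^2)*(1-y^2))]
            
          rw [hset, Real.volume_Ioo, Set.indicator_of_mem hy]
          congr 1
          rw [Real.sqrt_mul (by linarith) ]
          ring
        · have hempty : Prod.mk y ⁻¹' (Prod.mk x ⁻¹' S) = ∅ := by
            ext z
            simp only [hS, Set.mem_preimage, Set.mem_setOf_eq, Set.mem_empty_iff_false,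
              iff_false, not_and]
            intro _ hy2
            exfalso
            simp only [Set.mem_Ioo, not_and_or, not_lt] at hy
            rcases hy with h | h <;> nlinarith
          rw [hempty, Set.indicator_of_notMem hy]
          simp
      simp_rw [inner]
      rw [lintegral_indicator measurableSet_Ioo _]
      rw [Set.indicator_of_mem hx]
      calc ∫⁻ y in Ioo (-1:ℝ) 1, ENNReal.ofReal (2 * Real.sqrt (1-x^2) * Real.sqrt (1-y^2))
          = ∫⁻ y in Ioo (-1:ℝ) 1,
              ENNReal.ofReal (2 * Real.sqrt (1-x^2)) * ENNReal.ofReal (Real.sqrt (1-y^2)) := by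
            congr 1; ext y; rw [← ENNReal.ofReal_mul (by positivity)]
        _ = ENNReal.ofReal (2 * Real.sqrt (1-x^2)) *
              ∫⁻ y in Ioo (-1:ℝ) 1, ENNReal.ofReal (Real.sqrt (1-y^2)) :=
            lintegral_const_mul' _ _ ENNReal.ofReal_ne_top
        _ = ENNReal.ofReal (2 * Real.sqrt (1-x^2)) * ENNReal.ofReal (π/2) := by
            rw [sqrt_lintegral]
    · have hempty : Prod.mk x ⁻¹' S = ∅ := by
        ext q
        simp only [hS, Set.mem_preimage, Set.mem_setOf_eq, Set.mem_empty_iff_false, iff_false,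
          not_and]
        intro hx2
        exfalso
        simp only [Set.mem_Ioo, not_and_or, not_lt] at hx
        rcases hx with h | h <;> nlinarith
      rw [hempty, Set.indicator_of_notMem hx]
      exact measure_empty
  simp_rw [key]
  rw [lintegral_indicator measurableSet_Ioo _]
  calc ∫⁻ x in Ioo (-1:ℝ) 1, ENNReal.ofReal (2 * Real.sqrt (1-x^2)) * ENNReal.ofReal (π/2)
      = ∫⁻ x in Ioo (-1:ℝ) 1, (ENNReal.ofReal 2 * ENNReal.ofReal (π/2)) *
          ENNReal.ofReal (Real.sqrt (1-x^2)) := by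
        congr 1; ext x
        rw [ENNReal.ofReal_mul (by norm_num)]
        ring
    _ = (ENNReal.ofReal 2 * ENNReal.ofReal (π/2)) *
          ∫⁻ x in Ioo (-1:ℝ) 1, ENNReal.ofReal (Real.sqrt (1-x^2)) :=
        lintegral_const_mul' _ _ (by finiteness)
    _ = ENNReal.ofReal (π^2/2) := by
        rw [sqrt_lintegral, ← ENNReal.ofReal_mul (by norm_num),
          ← ENNReal.ofReal_mul (by positivity)]
        congr 1
        ring


lemma integral_id_mul_log : ∫ t in (0:ℝ)..1, t * Real.log t = -(1/4) := by
  have hF : ∀ t ∈ Ioo (0:ℝ) 1,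
      HasDerivAt (fun s : ℝ => s/2 * (s * Real.log s) - s^2/4) (t * Real.log t) t := by
    intro t ht
    have h1 : HasDerivAt (fun s : ℝ => s * Real.log s) (Real.log t + 1) t :=
      Real.hasDerivAt_mul_log (ne_of_gt ht.1)
    have h2 : HasDerivAt (fun s : ℝ => s/2) (1/2) t := (hasDerivAt_id t).div_const 2
    have h3 : HasDerivAt (fun s : ℝ => s^2/4) (2*t/4) t := by
      simpa using (hasDerivAt_pow 2 t).div_const 4
    have := (h2.mul h1).sub h3
    exact this.congr_deriv (by ring)
  have hcont : ContinuousOn (fun s : ℝ => s/2 * (s * Real.log s) - s^2/4) (Icc 0 1) := by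
    apply Continuous.continuousOn
    exact ((continuous_id.div_const 2).mul Real.continuous_mul_log).sub
      ((continuous_pow 2).div_const 4)
  have hint : IntervalIntegrable (fun t : ℝ => t * Real.log t) volume 0 1 :=
    Real.continuous_mul_log.intervalIntegrable 0 1
  have := intervalIntegral.integral_eq_sub_of_hasDeriv_right_of_le (by norm_num : (0:ℝ) ≤ 1)
    hcont (fun t ht => (hF t ht).hasDerivWithinAt) hint
  rw [this]
  norm_num

lemma J_integral (a : ℝ) (ha : 0 < a) (ha1 : a ≤ 1) :
    ∫ y in (0:ℝ)..1, (min (a/y) (y/a) - a*y) = -(a * Real.log a) := by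
  have hc1 : IntervalIntegrable (fun y : ℝ => y/a - a*y) volume 0 a :=
    ((by fun_prop : Continuous (fun y : ℝ => y/a - a*y))).intervalIntegrable 0 a
  have hc2 : IntervalIntegrable (fun y : ℝ => a * y⁻¹ - a*y) volume a 1 := by
    apply ContinuousOn.intervalIntegrable
    apply ContinuousOn.sub
    · exact continuousOn_const.mul (continuousOn_inv₀.mono (by
        intro y hy
        simp only [Set.uIcc_of_le ha1, Set.mem_Icc] at hy
        simp only [Set.mem_compl_iff, Set.mem_singleton_iff]
        intro h; rw [h] at hy; exact absurd hy.1 (not_le.2 ha)))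
    · fun_prop
  have e1 : ∫ y in (0:ℝ)..a, (min (a/y) (y/a) - a*y) = ∫ y in (0:ℝ)..a, (y/a - a*y) := by
    apply intervalIntegral.integral_congr
    intro y hy
    rw [Set.uIcc_of_le ha.le, Set.mem_Icc] at hy
    rcases eq_or_lt_of_le hy.1 with h | h
    · simp [← h]
    · have hmin : min (a/y) (y/a) = y/a := by
        apply min_eq_right
        rw [div_le_div_iff₀ ha h]
        nlinarith [hy.2]
      show min (a/y) (y/a) - a*y = y/a - a*y
      rw [hmin]
  have e2 : ∫ y in a..(1:ℝ), (min (a/y) (y/a) - a*y) = ∫ y in a..(1:ℝ), (a * y⁻¹ - a*y) := by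
    apply intervalIntegral.integral_congr
    intro y hy
    rw [Set.uIcc_of_le ha1, Set.mem_Icc] at hy
    have hy0 : 0 < y := lt_of_lt_of_le ha hy.1
    have hmin : min (a/y) (y/a) = a/y := by
      apply min_eq_left
      rw [div_le_div_iff₀ hy0 ha]
      nlinarith [hy.1]
    show min (a/y) (y/a) - a*y = a * y⁻¹ - a*y
    rw [hmin, div_eq_mul_inv]
  have i1 : IntervalIntegrable (fun y : ℝ => min (a/y) (y/a) - a*y) volume 0 a := by
    rw [intervalIntegrable_iff] at hc1 ⊢
    apply hc1.congr_fun ?_ measurableSet_uIoc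
    intro y hy
    rw [Set.uIoc_of_le ha.le, Set.mem_Ioc] at hy
    have hmin : min (a/y) (y/a) = y/a := by
      apply min_eq_right
      rw [div_le_div_iff₀ ha hy.1]
      nlinarith [hy.2]
    show y/a - a*y = min (a/y) (y/a) - a*y
    rw [hmin]
  have i2 : IntervalIntegrable (fun y : ℝ => min (a/y) (y/a) - a*y) volume a 1 := by
    rw [intervalIntegrable_iff] at hc2 ⊢
    apply hc2.congr_fun ?_ measurableSet_uIoc
    intro y hy
    rw [Set.uIoc_of_le ha1, Set.mem_Ioc] at hy
    have hy0 : 0 < y := lt_trans ha hy.1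
    have hmin : min (a/y) (y/a) = a/y := by
      apply min_eq_left
      rw [div_le_div_iff₀ hy0 ha]
      nlinarith [hy.1]
    show a * y⁻¹ - a*y = min (a/y) (y/a) - a*y
    rw [hmin, div_eq_mul_inv]
  rw [← intervalIntegral.integral_add_adjacent_intervals i1 i2, e1, e2]
  have v1 : ∫ y in (0:ℝ)..a, (y/a - a*y) = a/2 - a^3/2 := by
    have : ∀ y : ℝ, y/a - a*y = (1/a - a) * y := fun y => by ring
    simp_rw [this]
    rw [intervalIntegral.integral_const_mul, integral_id]
    field_simp
    ring
  have v2 : ∫ y in a..(1:ℝ), (a * y⁻¹ - a*y) = -(a * Real.log a) - (a/2 - a^3/2) := by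
    rw [intervalIntegral.integral_sub (by
        exact (continuousOn_const.mul (continuousOn_inv₀.mono (by
          intro y hy
          simp only [Set.uIcc_of_le ha1, Set.mem_Icc] at hy
          simp only [Set.mem_compl_iff, Set.mem_singleton_iff]
          intro h; rw [h] at hy; exact absurd hy.1 (not_le.2 ha)))).intervalIntegrable)
      (((by fun_prop : Continuous (fun y : ℝ => a*y))).intervalIntegrable a 1)]
    rw [intervalIntegral.integral_const_mul, intervalIntegral.integral_const_mul,
      integral_inv_of_pos ha one_pos, integral_id]
    rw [Real.log_div one_ne_zero (ne_of_gt ha)]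
    simp [Real.log_one]
    ring
  rw [v1, v2]
  ring


set_option maxHeartbeats 1000000 in
lemma M_slice {x y : ℝ} (hx : x ∈ Icc (-1:ℝ) 1) (hy : y ∈ Icc (-1:ℝ) 1)
    (hx0 : x ≠ 0) (hy0 : y ≠ 0) :
    volume {z : ℝ | x ∈ Icc (-1:ℝ) 1 ∧ y ∈ Icc (-1:ℝ) 1 ∧ z ∈ Icc (-1:ℝ) 1 ∧
        0 ≤ x * y * z ∧ |x * y| ≤ |z| ∧ |x * z| ≤ |y| ∧ |y * z| ≤ |x|} =
      ENNReal.ofReal (min (|x|/|y|) (|y|/|x|) - |x| * |y|) := by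
  have ha : 0 < |x| := abs_pos.2 hx0
  have hb : 0 < |y| := abs_pos.2 hy0
  have ha1 : |x| ≤ 1 := abs_le.2 ⟨hx.1, hx.2⟩
  have hb1 : |y| ≤ 1 := abs_le.2 ⟨hy.1, hy.2⟩
  set a := |x| with hadef
  set b := |y| with hbdef
  set m := min (a/b) (b/a) with hmdef
  have hma : m ≤ a/b := min_le_left _ _
  have hmb : m ≤ b/a := min_le_right _ _
  have hm1 : m ≤ 1 := by
    rcases le_total a b with h | h
    · exact le_trans hma ((div_le_one hb).2 h)
    · exact le_trans hmb ((div_le_one ha).2 h)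
  have hm0 : a * b ≤ m := by
    have hbb : b*b ≤ 1 := by nlinarith
    have haa : a*a ≤ 1 := by nlinarith
    apply le_min
    · rw [le_div_iff₀ hb]; nlinarith [mul_nonneg ha.le (sub_nonneg.2 hbb)]
    · rw [le_div_iff₀ ha]; nlinarith [mul_nonneg hb.le (sub_nonneg.2 haa)]
  have habs : |x*y| = a*b := abs_mul x y
  rcases lt_or_gt_of_ne (mul_ne_zero hx0 hy0) with hneg | hpos
  · have hset : {z : ℝ | x ∈ Icc (-1:ℝ) 1 ∧ y ∈ Icc (-1:ℝ) 1 ∧ z ∈ Icc (-1:ℝ) 1 ∧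
        0 ≤ x * y * z ∧ |x * y| ≤ |z| ∧ |x * z| ≤ |y| ∧ |y * z| ≤ |x|} = Icc (-m) (-(a*b)) := by
      ext z
      simp only [Set.mem_setOf_eq, Set.mem_Icc]
      constructor
      · rintro ⟨-, -, ⟨hz1, hz2⟩, h0, h1, h2, h3⟩
        have hz : z ≤ 0 := by
          by_contra hc
          push_neg at hc
          nlinarith
        have hzabs : |z| = -z := abs_of_nonpos hz
        rw [habs, hzabs] at h1
        rw [abs_mul, hzabs] at h2 h3
        have c1 : -z ≤ a/b := by rw [le_div_iff₀ hb]; nlinarith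
        have c2 : -z ≤ b/a := by rw [le_div_iff₀ ha]; nlinarith
        exact ⟨by have := le_min c1 c2; linarith, by linarith⟩
      · rintro ⟨h1, h2⟩
        have hw1 : a*b ≤ -z := by linarith
        have hw2 : -z ≤ m := by linarith
        have hz : z ≤ 0 := by nlinarith
        have hzabs : |z| = -z := abs_of_nonpos hz
        refine ⟨hx, hy, ⟨by linarith, by nlinarith⟩, ?_, ?_, ?_, ?_⟩
        · nlinarith [mul_nonneg (neg_nonneg.2 hneg.le) (neg_nonneg.2 hz)]
        · rw [habs, hzabs]; linarith
        · rw [abs_mul, hzabs]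
          have := (le_div_iff₀ ha).1 (le_trans hw2 hmb)
          nlinarith
        · rw [abs_mul, hzabs]
          have := (le_div_iff₀ hb).1 (le_trans hw2 hma)
          nlinarith
    rw [hset, Real.volume_Icc]
    congr 1
    ring
  · have hset : {z : ℝ | x ∈ Icc (-1:ℝ) 1 ∧ y ∈ Icc (-1:ℝ) 1 ∧ z ∈ Icc (-1:ℝ) 1 ∧
        0 ≤ x * y * z ∧ |x * y| ≤ |z| ∧ |x * z| ≤ |y| ∧ |y * z| ≤ |x|} = Icc (a*b) m := by
      ext z
      simp only [Set.mem_setOf_eq, Set.mem_Icc]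
      constructor
      · rintro ⟨-, -, ⟨hz1, hz2⟩, h0, h1, h2, h3⟩
        have hz : 0 ≤ z := by
          by_contra hc
          push_neg at hc
          nlinarith
        have hzabs : |z| = z := abs_of_nonneg hz
        rw [habs, hzabs] at h1
        rw [abs_mul, hzabs] at h2 h3
        have c1 : z ≤ a/b := by rw [le_div_iff₀ hb]; nlinarith
        have c2 : z ≤ b/a := by rw [le_div_iff₀ ha]; nlinarith
        exact ⟨h1, le_min c1 c2⟩
      · rintro ⟨h1, h2⟩
        have hz : 0 ≤ z := le_trans (mul_nonneg ha.le hb.le) h1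
        have hzabs : |z| = z := abs_of_nonneg hz
        refine ⟨hx, hy, ⟨by linarith, by linarith⟩, ?_, ?_, ?_, ?_⟩
        · exact mul_nonneg hpos.le hz
        · rw [habs, hzabs]; linarith
        · rw [abs_mul, hzabs]
          have := (le_div_iff₀ ha).1 (le_trans h2 hmb)
          nlinarith
        · rw [abs_mul, hzabs]
          have := (le_div_iff₀ hb).1 (le_trans h2 hma)
          nlinarith
    rw [hset, Real.volume_Icc]

lemma ae_ne_zero : ∀ᵐ y : ℝ ∂volume, y ≠ 0 := by
  rw [ae_iff]
  simp only [ne_eq, not_not, Set.setOf_eq_eq_singleton]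
  exact measure_singleton 0

lemma M_inner {x : ℝ} (hx : x ∈ Icc (-1:ℝ) 1) (hx0 : x ≠ 0) :
    ∫⁻ y, volume {z : ℝ | x ∈ Icc (-1:ℝ) 1 ∧ y ∈ Icc (-1:ℝ) 1 ∧ z ∈ Icc (-1:ℝ) 1 ∧
        0 ≤ x * y * z ∧ |x * y| ≤ |z| ∧ |x * z| ≤ |y| ∧ |y * z| ≤ |x|} =
      ENNReal.ofReal (-(2 * (|x| * Real.log |x|))) := by
  have ha : 0 < |x| := abs_pos.2 hx0
  have ha1 : |x| ≤ 1 := abs_le.2 ⟨hx.1, hx.2⟩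
  set g : ℝ → ℝ := fun y => min (|x|/|y|) (|y|/|x|) - |x| * |y| with hg
  have hae : (fun y : ℝ => volume {z : ℝ | x ∈ Icc (-1:ℝ) 1 ∧ y ∈ Icc (-1:ℝ) 1 ∧
      z ∈ Icc (-1:ℝ) 1 ∧ 0 ≤ x * y * z ∧ |x * y| ≤ |z| ∧ |x * z| ≤ |y| ∧ |y * z| ≤ |x|})
      =ᵐ[volume] Set.indicator (Icc (-1:ℝ) 1) (fun y => ENNReal.ofReal (g y)) := by
    filter_upwards [ae_ne_zero] with y hy0
    by_cases hy : y ∈ Icc (-1:ℝ) 1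
    · rw [M_slice hx hy hx0 hy0, Set.indicator_of_mem hy]
    · rw [Set.indicator_of_notMem hy]
      have : {z : ℝ | x ∈ Icc (-1:ℝ) 1 ∧ y ∈ Icc (-1:ℝ) 1 ∧ z ∈ Icc (-1:ℝ) 1 ∧
          0 ≤ x * y * z ∧ |x * y| ≤ |z| ∧ |x * z| ≤ |y| ∧ |y * z| ≤ |x|} = ∅ :=
        Set.eq_empty_iff_forall_notMem.2 fun z hz => hy hz.2.1
      rw [this, measure_empty]
  rw [lintegral_congr_ae hae, lintegral_indicator measurableSet_Icc]
  have hmeas : Measurable g := by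
    apply Measurable.sub
    · exact Measurable.min (measurable_const.div measurable_abs)
        (measurable_abs.div measurable_const)
    · exact measurable_abs.const_mul _
  have hbdd : ∀ y ∈ Icc (-1:ℝ) 1, ‖g y‖ ≤ 2 := by
    intro y hy
    have hb1 : |y| ≤ 1 := abs_le.2 ⟨hy.1, hy.2⟩
    have hab : |x| * |y| ≤ 1 := by nlinarith [abs_nonneg y]
    have hmin0 : 0 ≤ min (|x|/|y|) (|y|/|x|) :=
      le_min (div_nonneg ha.le (abs_nonneg y)) (div_nonneg (abs_nonneg y) ha.le)
    have hmin1 : min (|x|/|y|) (|y|/|x|) ≤ 1 := by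
      rcases eq_or_ne y 0 with h | h
      · simp [h]
      · have hb : 0 < |y| := abs_pos.2 h
        rcases le_total |x| |y| with hle | hle
        · exact le_trans (min_le_left _ _) ((div_le_one hb).2 hle)
        · exact le_trans (min_le_right _ _) ((div_le_one ha).2 hle)
    rw [Real.norm_eq_abs, abs_le]
    have hab0 : 0 ≤ |x| * |y| := mul_nonneg (abs_nonneg x) (abs_nonneg y)
    constructor
    · show -2 ≤ min (|x|/|y|) (|y|/|x|) - |x| * |y|
      linarith
    · show min (|x|/|y|) (|y|/|x|) - |x| * |y| ≤ 2
      linarith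
  have hint : IntegrableOn g (Icc (-1:ℝ) 1) := by
    refine Integrable.mono' (g := fun _ => (2:ℝ)) ?_ hmeas.aestronglyMeasurable ?_
    · exact integrableOn_const (by rw [Real.volume_Icc]; exact ENNReal.ofReal_ne_top)
    · filter_upwards [ae_restrict_mem measurableSet_Icc] with y hy
      exact hbdd y hy
  have hnn : 0 ≤ᵐ[volume.restrict (Icc (-1:ℝ) 1)] g := by
    filter_upwards [ae_restrict_mem measurableSet_Icc, ae_restrict_of_ae ae_ne_zero]
      with y hy hy0
    have hb : 0 < |y| := abs_pos.2 hy0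
    have hb1 : |y| ≤ 1 := abs_le.2 ⟨hy.1, hy.2⟩
    have hbb : |y| * |y| ≤ 1 := by nlinarith
    have haa : |x| * |x| ≤ 1 := by nlinarith
    have : |x| * |y| ≤ min (|x|/|y|) (|y|/|x|) := by
      apply le_min
      · rw [le_div_iff₀ hb]; nlinarith [mul_nonneg ha.le (sub_nonneg.2 hbb)]
      · rw [le_div_iff₀ ha]; nlinarith [mul_nonneg hb.le (sub_nonneg.2 haa)]
    simp only [hg, Pi.zero_apply]
    linarith
  rw [← ofReal_integral_eq_lintegral_ofReal hint hnn]
  congr 1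
  have i1 : IntervalIntegrable g volume (-1) 0 := by
    rw [intervalIntegrable_iff]
    exact hint.mono_set (fun t ht => by
      rw [Set.uIoc_of_le (by norm_num : (-1:ℝ) ≤ 0)] at ht
      exact ⟨ht.1.le, le_trans ht.2 one_pos.le⟩)
  have i2 : IntervalIntegrable g volume 0 1 := by
    rw [intervalIntegrable_iff]
    exact hint.mono_set (fun t ht => by
      rw [Set.uIoc_of_le (by norm_num : (0:ℝ) ≤ 1)] at ht
      exact ⟨le_trans (by norm_num) ht.1.le, ht.2⟩)
  have hpos : ∫ y in (0:ℝ)..1, g y = -(|x| * Real.log |x|) := by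
    have : ∫ y in (0:ℝ)..1, g y = ∫ y in (0:ℝ)..1, (min (|x|/y) (y/|x|) - |x| * y) := by
      apply intervalIntegral.integral_congr
      intro y hy
      rw [Set.uIcc_of_le (by norm_num : (0:ℝ) ≤ 1), Set.mem_Icc] at hy
      show g y = min (|x|/y) (y/|x|) - |x| * y
      rw [hg]
      simp only [abs_of_nonneg hy.1]
    rw [this, J_integral |x| ha ha1]
  have hneg : ∫ y in (-1:ℝ)..0, g y = ∫ y in (0:ℝ)..1, g y := by
    have h := intervalIntegral.integral_comp_neg (a := (0:ℝ)) (b := 1) (f := g)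
    have h2 : ∀ y : ℝ, g (-y) = g y := fun y => by rw [hg]; simp only [abs_neg]
    simp only [h2, neg_zero] at h
    rw [← h]
  rw [MeasureTheory.integral_Icc_eq_integral_Ioc,
    ← intervalIntegral.integral_of_le (by norm_num : (-1:ℝ) ≤ 1),
    ← intervalIntegral.integral_add_adjacent_intervals i1 i2, hneg, hpos]
  ring

lemma volM : volume {p : ℝ × ℝ × ℝ |
    p.1 ∈ Set.Icc (-1 : ℝ) 1 ∧ p.2.1 ∈ Set.Icc (-1 : ℝ) 1 ∧
    p.2.2 ∈ Set.Icc (-1 : ℝ) 1 ∧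
    0 ≤ p.1 * p.2.1 * p.2.2 ∧ |p.1 * p.2.1| ≤ |p.2.2| ∧
    |p.1 * p.2.2| ≤ |p.2.1| ∧ |p.2.1 * p.2.2| ≤ |p.1|} = 1 := by
  set M : Set (ℝ × ℝ × ℝ) := {p : ℝ × ℝ × ℝ |
    p.1 ∈ Set.Icc (-1 : ℝ) 1 ∧ p.2.1 ∈ Set.Icc (-1 : ℝ) 1 ∧
    p.2.2 ∈ Set.Icc (-1 : ℝ) 1 ∧
    0 ≤ p.1 * p.2.1 * p.2.2 ∧ |p.1 * p.2.1| ≤ |p.2.2| ∧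
    |p.1 * p.2.2| ≤ |p.2.1| ∧ |p.2.1 * p.2.2| ≤ |p.1|} with hM
  have hclosed : IsClosed M := by
    rw [hM]
    simp only [Set.setOf_and]
    refine IsClosed.inter (isClosed_Icc.preimage continuous_fst) (IsClosed.inter
      (isClosed_Icc.preimage (continuous_fst.comp continuous_snd)) (IsClosed.inter
      (isClosed_Icc.preimage (continuous_snd.comp continuous_snd)) (IsClosed.inter
      (isClosed_le continuous_const (by fun_prop)) (IsClosed.inter
      (isClosed_le (by fun_prop) (by fun_prop)) (IsClosed.inter
      (isClosed_le (by fun_prop) (by fun_prop))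
      (isClosed_le (by fun_prop) (by fun_prop)))))))
  have hmM : MeasurableSet M := hclosed.measurableSet
  rw [Measure.volume_eq_prod, Measure.prod_apply hmM]
  have key : ∀ᵐ x : ℝ ∂volume, volume (Prod.mk x ⁻¹' M) =
      Set.indicator (Icc (-1:ℝ) 1)
        (fun x => ENNReal.ofReal (-(2 * (|x| * Real.log |x|)))) x := by
    filter_upwards [ae_ne_zero] with x hx0
    by_cases hx : x ∈ Icc (-1:ℝ) 1
    · rw [Set.indicator_of_mem hx]
      have hm2 : MeasurableSet (Prod.mk x ⁻¹' M) := measurable_prodMk_left hmM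
      rw [Measure.volume_eq_prod, Measure.prod_apply hm2]
      exact M_inner hx hx0
    · rw [Set.indicator_of_notMem hx]
      have : Prod.mk x ⁻¹' M = ∅ :=
        Set.eq_empty_iff_forall_notMem.2 fun q hq => hx hq.1
      rw [this, measure_empty]
  rw [lintegral_congr_ae key, lintegral_indicator measurableSet_Icc]
  have hcont : Continuous (fun x : ℝ => -(2 * (|x| * Real.log |x|))) := by
    have : Continuous (fun x : ℝ => |x| * Real.log |x|) :=
      Real.continuous_mul_log.comp continuous_abs
    fun_prop
  have hint : IntegrableOn (fun x : ℝ => -(2 * (|x| * Real.log |x|))) (Icc (-1:ℝ) 1) :=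
    hcont.integrableOn_Icc
  have hnn : 0 ≤ᵐ[volume.restrict (Icc (-1:ℝ) 1)]
      (fun x : ℝ => -(2 * (|x| * Real.log |x|))) := by
    filter_upwards [ae_restrict_mem measurableSet_Icc] with x hx
    have h1 : |x| ≤ 1 := abs_le.2 ⟨hx.1, hx.2⟩
    have := Real.mul_log_nonpos (abs_nonneg x) h1
    simp only [Pi.zero_apply]
    linarith
  rw [← ofReal_integral_eq_lintegral_ofReal hint hnn]
  have i1 : IntervalIntegrable (fun x : ℝ => -(2 * (|x| * Real.log |x|))) volume (-1) 0 :=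
    hcont.intervalIntegrable _ _
  have i2 : IntervalIntegrable (fun x : ℝ => -(2 * (|x| * Real.log |x|))) volume 0 1 :=
    hcont.intervalIntegrable _ _
  have hposint : ∫ x in (0:ℝ)..1, -(2 * (|x| * Real.log |x|)) = 1/2 := by
    have he : ∫ x in (0:ℝ)..1, -(2 * (|x| * Real.log |x|)) =
        ∫ x in (0:ℝ)..1, (-2) * (x * Real.log x) := by
      apply intervalIntegral.integral_congr
      intro y hy
      rw [Set.uIcc_of_le (by norm_num : (0:ℝ) ≤ 1), Set.mem_Icc] at hy
      show -(2 * (|y| * Real.log |y|)) = (-2) * (y * Real.log y)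
      rw [abs_of_nonneg hy.1]
      ring
    rw [he, intervalIntegral.integral_const_mul, integral_id_mul_log]
    norm_num
  have hnegint : ∫ x in (-1:ℝ)..0, -(2 * (|x| * Real.log |x|)) =
      ∫ x in (0:ℝ)..1, -(2 * (|x| * Real.log |x|)) := by
    have h := intervalIntegral.integral_comp_neg (a := (0:ℝ)) (b := 1)
      (f := fun x : ℝ => -(2 * (|x| * Real.log |x|)))
    simp only [abs_neg, neg_zero] at h
    rw [← h]
  rw [MeasureTheory.integral_Icc_eq_integral_Ioc,
    ← intervalIntegral.integral_of_le (by norm_num : (-1:ℝ) ≤ 1),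
    ← intervalIntegral.integral_add_adjacent_intervals i1 i2, hnegint, hposint]
  norm_num

/-- The Lebesgue volume of the correlation space
`M = {(x,y,z) ∈ [−1,1]³ : xyz ≥ 0, |xy| ≤ |z|, |xz| ≤ |y|, |yz| ≤ |x|}` of the tripod
latent tree model equals `2/π²` times the Lebesgue volume of the elliptope
`E` of 3×3 positive definite correlation matrices. -/
theorem tripod_model_volume_ratio :
    volume {p : ℝ × ℝ × ℝ |
        p.1 ∈ Set.Icc (-1 : ℝ) 1 ∧ p.2.1 ∈ Set.Icc (-1 : ℝ) 1 ∧
        p.2.2 ∈ Set.Icc (-1 : ℝ) 1 ∧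
        0 ≤ p.1 * p.2.1 * p.2.2 ∧ |p.1 * p.2.1| ≤ |p.2.2| ∧
        |p.1 * p.2.2| ≤ |p.2.1| ∧ |p.2.1 * p.2.2| ≤ |p.1|} =
    ENNReal.ofReal (2 / Real.pi ^ 2) *
      volume {p : ℝ × ℝ × ℝ |
        (Matrix.of ![![1, p.1, p.2.1], ![p.1, 1, p.2.2], ![p.2.1, p.2.2, 1]]).PosDef} := by
  have hE : {p : ℝ × ℝ × ℝ |
      (Matrix.of ![![1, p.1, p.2.1], ![p.1, 1, p.2.2], ![p.2.1, p.2.2, 1]]).PosDef} =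
      {p : ℝ × ℝ × ℝ |
      p.1^2 < 1 ∧ p.2.1^2 < 1 ∧ (p.2.2 - p.1*p.2.1)^2 < (1-p.1^2)*(1-p.2.1^2)} :=
    Set.ext fun p => posdef_iff p.1 p.2.1 p.2.2
  rw [volM, hE, volE, ← ENNReal.ofReal_mul (by positivity)]
  rw [show (2 / Real.pi ^ 2) * (Real.pi^2/2) = 1 by
    field_simp]
  simp
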